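/- (Comparison principle for the half-space operator) Let m > 0 and let w be a C² function on the closed region Ω_R^+ = {(x,y) ∈ [0,∞)×ℝ^N : √(x²+|y|²) ≥ R} satisfying −Δw + m²w ≥ 0 in the interior, w ≥ 0 on the spherical boundary {√(x²+|y|²) = R, x ≥ 0}, w(x,y) → 0 as x+|y| → ∞, and such that at every boundary point (0,y₀) with |y₀| ≥ R where w attains a negative interior minimum, one has −∂w/∂x(0,y₀) ≥ λ w(0,y₀) for some fixed 0 < λ < m. Then w ≥ 0 on all of Ω_R^+. -/

import Mathlib

noncomputable section
open Filter Topology Set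

/-- Laplacian (sum of pure second directional derivatives) of a function on the
half-space model `ℝ × ℝ^N`. -/
def lapH {N : ℕ} (f : ℝ × EuclideanSpace ℝ (Fin N) → ℝ)
    (z : ℝ × EuclideanSpace ℝ (Fin N)) : ℝ :=
  fderiv ℝ (fun w => fderiv ℝ f w ((1 : ℝ), 0)) z ((1 : ℝ), 0)
    + ∑ i : Fin N,
        fderiv ℝ (fun w => fderiv ℝ f w ((0 : ℝ), EuclideanSpace.single i (1 : ℝ))) z
          ((0 : ℝ), EuclideanSpace.single i (1 : ℝ))


lemma line_hasDerivAt {E : Type*} [NormedAddCommGroup E] [NormedSpace ℝ E]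
    (f : E → ℝ) (hf : Differentiable ℝ f) (p e : E) (t : ℝ) :
    HasDerivAt (fun s : ℝ => f (p + s • e)) (fderiv ℝ f (p + t • e) e) t := by
  have h1 : HasDerivAt (fun s : ℝ => p + s • e) e t := by
    simpa using ((hasDerivAt_id t).smul_const e).const_add p
  exact (hf (p + t • e)).hasFDerivAt.comp_hasDerivAt t h1

lemma second_deriv_test {g A : ℝ → ℝ} {B : ℝ}
    (hA : ∀ t, HasDerivAt g (A t) t) (hB : HasDerivAt A B 0)
    (hmin : ∀ᶠ t in 𝓝 (0:ℝ), g 0 ≤ g t) : A 0 = 0 ∧ 0 ≤ B := by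
  have hmin' : IsLocalMin g 0 := hmin
  have hA0 : A 0 = 0 := hmin'.hasDerivAt_eq_zero (hA 0)
  refine ⟨hA0, ?_⟩
  by_contra hB0
  push_neg at hB0
  have hslope : Tendsto (fun t => A t / t) (𝓝[>] (0:ℝ)) (𝓝 B) := by
    have h1 := (hasDerivAt_iff_tendsto_slope.1 hB).mono_left
      (nhdsWithin_mono (0:ℝ) (fun t (ht : t ∈ Ioi (0:ℝ)) => ne_of_gt ht))
    refine h1.congr (fun t => ?_)
    simp [slope_def_field, hA0]
  have h4 : ∀ᶠ t in 𝓝[>] (0:ℝ), A t / t < B / 2 :=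
    hslope.eventually_lt_const (by linarith)
  have h5 : ∀ᶠ t in 𝓝[>] (0:ℝ), A t < 0 := by
    filter_upwards [h4, eventually_mem_nhdsWithin] with t ht ht'
    have ht0 : (0:ℝ) < t := ht'
    have hdiv : A t / t < 0 := lt_of_lt_of_le ht (by linarith)
    rcases div_neg_iff.1 hdiv with ⟨h1, h2⟩ | ⟨h1, h2⟩
    · linarith
    · exact h1
  obtain ⟨u, hu, hsub⟩ := mem_nhdsGT_iff_exists_Ioo_subset.1 h5
  obtain ⟨ε', hε', hball⟩ := Metric.mem_nhds_iff.1 hmin'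
  set t0 : ℝ := min u ε' / 2 with ht0def
  have hu0 : (0:ℝ) < u := hu
  have ht00 : 0 < t0 := by positivity
  have ht0u : t0 < u := by
    have := min_le_left u ε'
    simp only [ht0def]
    linarith [min_le_left u ε', hu0, hε']
  have hanti : StrictAntiOn g (Icc 0 t0) := by
    apply strictAntiOn_of_deriv_neg (convex_Icc 0 t0)
    · exact (Continuous.continuousOn (by
        exact continuous_iff_continuousAt.2 fun x => (hA x).continuousAt))
    · intro x hx
      rw [interior_Icc] at hx
      rw [(hA x).deriv]
      exact hsub ⟨hx.1, lt_trans hx.2 ht0u⟩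
  have hlt : g t0 < g 0 := hanti (left_mem_Icc.2 (le_of_lt ht00)) (right_mem_Icc.2 (le_of_lt ht00)) ht00
  have hge : g 0 ≤ g t0 := by
    apply hball
    simp only [Metric.mem_ball, Real.dist_eq, sub_zero]
    rw [abs_of_pos ht00]
    have := min_le_right u ε'
    simp only [ht0def]
    linarith [min_le_right u ε', hu0, hε']
  linarith

lemma right_min_deriv_nonneg {g : ℝ → ℝ} {d : ℝ} (hg : HasDerivAt g d 0)
    (h : ∀ t : ℝ, 0 ≤ t → g 0 ≤ g t) : 0 ≤ d := by
  have h1 : Tendsto (slope g 0) (𝓝[>] (0:ℝ)) (𝓝 d) :=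
    (hasDerivAt_iff_tendsto_slope.1 hg).mono_left
      (nhdsWithin_mono (0:ℝ) (fun t (ht : t ∈ Ioi (0:ℝ)) => ne_of_gt ht))
  refine ge_of_tendsto h1 ?_
  filter_upwards [eventually_mem_nhdsWithin] with t ht
  have ht0 : (0:ℝ) < t := ht
  rw [slope_def_field]
  apply div_nonneg _ (by linarith)
  have := h t (le_of_lt ht0)
  linarith


lemma dir_second_bound {N : ℕ} (w : ℝ × EuclideanSpace ℝ (Fin N) → ℝ)
    (hw : ContDiff ℝ 2 w) (p e : ℝ × EuclideanSpace ℝ (Fin N))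
    (H H' H'' : ℝ → ℝ)
    (hH' : ∀ x, HasDerivAt H (H' x) x) (hH'' : ∀ x, HasDerivAt H' (H'' x) x)
    (hHpos : ∀ x, 0 < H x)
    (hmin : ∀ᶠ t in 𝓝 (0:ℝ), w p / H p.1 ≤ w (p + t • e) / H (p.1 + t * e.1)) :
    w p / H p.1 * (H'' p.1 * e.1 * e.1) ≤ fderiv ℝ (fun z => fderiv ℝ w z e) p e := by
  have hwd : Differentiable ℝ w := hw.differentiable (by norm_num)
  have hg : ∀ t : ℝ, HasDerivAt (fun s : ℝ => w (p + s • e)) (fderiv ℝ w (p + t • e) e) t :=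
    line_hasDerivAt w hwd p e
  have hF : Differentiable ℝ (fun z => fderiv ℝ w z e) :=
    ((hw.fderiv_right (m := 1) (le_refl 2)).clm_apply contDiff_const).differentiable one_ne_zero
  have hG : HasDerivAt (fun t : ℝ => fderiv ℝ w (p + t • e) e)
      (fderiv ℝ (fun z => fderiv ℝ w z e) p e) 0 := by
    have := line_hasDerivAt (fun z => fderiv ℝ w z e) hF p e 0
    simpa using this
  have hline : ∀ t : ℝ, HasDerivAt (fun s : ℝ => p.1 + s * e.1) e.1 t := fun t => by
    simpa using ((hasDerivAt_id t).mul_const e.1).const_add p.1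
  have hψ : ∀ t : ℝ, HasDerivAt (fun s : ℝ => H (p.1 + s * e.1)) (H' (p.1 + t * e.1) * e.1) t :=
    fun t => (hH' (p.1 + t * e.1)).comp t (hline t)
  have hψ' : ∀ t : ℝ, HasDerivAt (fun s : ℝ => H' (p.1 + s * e.1) * e.1)
      (H'' (p.1 + t * e.1) * e.1 * e.1) t :=
    fun t => ((hH'' (p.1 + t * e.1)).comp t (hline t)).mul_const e.1
  have hψne : ∀ t : ℝ, H (p.1 + t * e.1) ≠ 0 := fun t => (hHpos _).ne'
  have hA : ∀ t : ℝ, HasDerivAt (fun s : ℝ => w (p + s • e) / H (p.1 + s * e.1))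
      ((fun t : ℝ => (fderiv ℝ w (p + t • e) e * H (p.1 + t * e.1)
          - w (p + t • e) * (H' (p.1 + t * e.1) * e.1)) / H (p.1 + t * e.1) ^ 2) t) t :=
    fun t => (hg t).div (hψ t) (hψne t)
  obtain ⟨B, hB⟩ : ∃ B, HasDerivAt (fun t : ℝ => (fderiv ℝ w (p + t • e) e * H (p.1 + t * e.1)
          - w (p + t • e) * (H' (p.1 + t * e.1) * e.1)) / H (p.1 + t * e.1) ^ 2) B 0 := by
    have hnum := (hG.mul (hψ 0)).sub ((hg 0).mul (hψ' 0))
    have hden := (hψ 0).pow 2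
    exact ⟨_, hnum.div hden (pow_ne_zero 2 (hψne 0))⟩
  have hmin' : ∀ᶠ t in 𝓝 (0:ℝ), (fun s : ℝ => w (p + s • e) / H (p.1 + s * e.1)) 0
      ≤ (fun s : ℝ => w (p + s • e) / H (p.1 + s * e.1)) t := by
    simpa using hmin
  obtain ⟨hA0, hB0⟩ := second_deriv_test hA hB hmin'
  simp only [zero_smul, add_zero, zero_mul, mul_zero] at hA0
  have hGfun : (fun t : ℝ => fderiv ℝ w (p + t • e) e)
      = fun t : ℝ => ((fderiv ℝ w (p + t • e) e * H (p.1 + t * e.1)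
          - w (p + t • e) * (H' (p.1 + t * e.1) * e.1)) / H (p.1 + t * e.1) ^ 2)
            * H (p.1 + t * e.1)
          + (w (p + t • e) / H (p.1 + t * e.1)) * (H' (p.1 + t * e.1) * e.1) := by
    funext t
    field_simp [hψne t]
    ring
  have h2 := (hB.mul (hψ 0)).add ((hA 0).mul (hψ' 0))
  rw [hGfun] at hG
  have hval := hG.unique h2
  simp only [zero_smul, add_zero, zero_mul, mul_zero] at hval
  rw [hA0] at hval
  simp only [zero_mul, mul_zero, zero_add, add_zero, zero_div] at hval
  rw [hval]
  have := mul_nonneg hB0 (hHpos p.1).le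
  linarith

set_option maxHeartbeats 1000000 in
/-- Comparison principle for the half-space operator `-Δ + m²` on the exterior
region `Ω_R⁺ = {(x,y) : x ≥ 0, √(x²+|y|²) ≥ R}`: a `C²` supersolution which is
nonnegative on the spherical boundary, tends to `0` at infinity, and satisfies the
Robin-type condition `-∂w/∂x(0,y₀) ≥ λ w(0,y₀)` (with `0 < λ < m`) at any flat
boundary point where a negative minimum is attained, is nonnegative on all of `Ω_R⁺`. -/
theorem stmt15 (N : ℕ) (m lam R : ℝ) (hm : 0 < m) (hlam0 : 0 < lam) (hlamm : lam < m)
    (hR : 0 < R)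
    (w : ℝ × EuclideanSpace ℝ (Fin N) → ℝ) (hw : ContDiff ℝ 2 w)
    (Ω : Set (ℝ × EuclideanSpace ℝ (Fin N)))
    (hΩ : Ω = {z | 0 ≤ z.1 ∧ R ≤ Real.sqrt (z.1 ^ 2 + ‖z.2‖ ^ 2)})
    (hsuper : ∀ z : ℝ × EuclideanSpace ℝ (Fin N),
      0 < z.1 → R < Real.sqrt (z.1 ^ 2 + ‖z.2‖ ^ 2) → 0 ≤ -lapH w z + m ^ 2 * w z)
    (hsphere : ∀ z : ℝ × EuclideanSpace ℝ (Fin N),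
      0 ≤ z.1 → Real.sqrt (z.1 ^ 2 + ‖z.2‖ ^ 2) = R → 0 ≤ w z)
    (hdecay : ∀ ε > (0 : ℝ), ∃ M : ℝ, ∀ z ∈ Ω, M ≤ z.1 + ‖z.2‖ → |w z| < ε)
    (hflat : ∀ y₀ : EuclideanSpace ℝ (Fin N), R ≤ ‖y₀‖ →
      (w (0, y₀) < 0 ∧ ∀ z ∈ Ω, w (0, y₀) ≤ w z) →
      lam * w (0, y₀) ≤ -(fderiv ℝ w (0, y₀) ((1 : ℝ), 0))) :
    ∀ z ∈ Ω, 0 ≤ w z := by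
  classical
  by_contra hcon
  push_neg at hcon
  obtain ⟨p₀, hp₀Ω, hp₀⟩ := hcon
  -- constants
  obtain ⟨μ, hμdef⟩ : ∃ x : ℝ, x = (lam + m) / 2 := ⟨_, rfl⟩
  have hmulam : lam < μ := by rw [hμdef]; linarith
  have hμm : μ < m := by rw [hμdef]; linarith
  have hμ0 : 0 < μ := by linarith
  obtain ⟨δ, hδdef⟩ : ∃ x : ℝ, x = (μ - lam) / (2 * lam) := ⟨_, rfl⟩
  have hδ0 : 0 < δ := by rw [hδdef]; exact div_pos (by linarith) (by linarith)
  obtain ⟨c, hcdef⟩ : ∃ x : ℝ, x = 1 / (1 + δ) := ⟨_, rfl⟩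
  have hc0 : 0 < c := by rw [hcdef]; positivity
  have hcμ : lam < c * μ := by
    rw [hcdef, div_mul_eq_mul_div, one_mul, lt_div_iff₀ (by linarith)]
    have hld : lam * δ = (μ - lam) / 2 := by
      rw [hδdef]; field_simp
    nlinarith
  -- the weight function H
  obtain ⟨H, hHdef⟩ : ∃ f : ℝ → ℝ, f = fun x => c * (Real.exp (-μ * x) + δ) := ⟨_, rfl⟩
  obtain ⟨H', hH'def⟩ : ∃ f : ℝ → ℝ, f = fun x => c * (Real.exp (-μ * x) * -μ) := ⟨_, rfl⟩
  obtain ⟨H'', hH''def⟩ : ∃ f : ℝ → ℝ, f = fun x => c * (Real.exp (-μ * x) * -μ * -μ) := ⟨_, rfl⟩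
  have hH' : ∀ x, HasDerivAt H (H' x) x := fun x => by
    have h1 : HasDerivAt (fun x : ℝ => -μ * x) (-μ) x := by
      simpa using (hasDerivAt_id x).const_mul (-μ)
    simpa [hHdef, hH'def, mul_comm] using ((h1.exp).add_const δ).const_mul c
  have hH'' : ∀ x, HasDerivAt H' (H'' x) x := fun x => by
    have h1 : HasDerivAt (fun x : ℝ => -μ * x) (-μ) x := by
      simpa using (hasDerivAt_id x).const_mul (-μ)
    simpa [hH'def, hH''def, mul_comm, mul_assoc, mul_left_comm]
      using ((h1.exp).mul_const (-μ)).const_mul c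
  have hHpos : ∀ x, 0 < H x := fun x => by
    simp only [hHdef]; positivity
  have hH0 : H 0 = 1 := by
    simp only [hHdef]
    simp
    rw [hcdef]; field_simp
  have hHlb : ∀ x, c * δ ≤ H x := fun x => by
    simp only [hHdef]
    nlinarith [Real.exp_pos (-μ * x)]
  have hHle1 : ∀ x, 0 ≤ x → H x ≤ 1 := fun x hx => by
    simp only [hHdef]
    have h1 : Real.exp (-μ * x) ≤ 1 := Real.exp_le_one_iff.2 (by nlinarith)
    have h2 : c * (1 + δ) = 1 := by rw [hcdef]; field_simp
    nlinarith
  have hcδ : 0 < c * δ := mul_pos hc0 hδ0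
  -- the auxiliary function v = w / H
  obtain ⟨v, hvdef⟩ : ∃ f : (ℝ × EuclideanSpace ℝ (Fin N)) → ℝ,
      f = fun z => w z / H z.1 := ⟨_, rfl⟩
  have hv0neg : v p₀ < 0 := by
    simp only [hvdef]
    exact div_neg_of_neg_of_pos hp₀ (hHpos _)
  have hHcont : Continuous H := by
    rw [hHdef]; fun_prop
  have hvcont : Continuous v := by
    rw [hvdef]
    exact hw.continuous.div (hHcont.comp continuous_fst) fun z => (hHpos z.1).ne'
  -- Ω is closed
  have hΩclosed : IsClosed Ω := by
    rw [hΩ]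
    have : {z : ℝ × EuclideanSpace ℝ (Fin N) | 0 ≤ z.1 ∧ R ≤ Real.sqrt (z.1 ^ 2 + ‖z.2‖ ^ 2)}
        = {z : ℝ × EuclideanSpace ℝ (Fin N) | 0 ≤ z.1}
          ∩ {z | R ≤ Real.sqrt (z.1 ^ 2 + ‖z.2‖ ^ 2)} := rfl
    rw [this]
    refine (isClosed_le continuous_const continuous_fst).inter
      (isClosed_le continuous_const ?_)
    fun_prop
  -- decay bound
  obtain ⟨M, hM⟩ := hdecay (c * δ * (-(v p₀)))
    (mul_pos hcδ (neg_pos.2 hv0neg))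
  obtain ⟨M', hM'def⟩ : ∃ x : ℝ, x = max M (p₀.1 + ‖p₀.2‖) := ⟨_, rfl⟩
  obtain ⟨K, hKdef⟩ : ∃ S : Set (ℝ × EuclideanSpace ℝ (Fin N)),
      S = Ω ∩ {z | z.1 + ‖z.2‖ ≤ M'} := ⟨_, rfl⟩
  have hmemK : ∀ z : ℝ × EuclideanSpace ℝ (Fin N), z ∈ Ω → z.1 + ‖z.2‖ ≤ M' → z ∈ K := by
    intro z h1 h2
    rw [hKdef]
    exact ⟨h1, h2⟩
  have hp₀K : p₀ ∈ K := hmemK p₀ hp₀Ω (by rw [hM'def]; exact le_max_right _ _)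
  have hKclosed : IsClosed K := by
    rw [hKdef]
    exact hΩclosed.inter (isClosed_le (by fun_prop) continuous_const)
  have hKcompact : IsCompact K := by
    refine (isCompact_closedBall (0 : ℝ × EuclideanSpace ℝ (Fin N)) (max M' 0)).of_isClosed_subset
      hKclosed ?_
    intro z hz
    rw [hKdef] at hz
    obtain ⟨hzΩ, hzM⟩ := hz
    have hzM' : z.1 + ‖z.2‖ ≤ M' := hzM
    rw [hΩ] at hzΩ
    obtain ⟨hz1, -⟩ := hzΩ
    rw [mem_closedBall_zero_iff, Prod.norm_def]
    have h2 : ‖z.2‖ ≤ M' := by linarith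
    have h1 : ‖z.1‖ ≤ M' := by
      rw [Real.norm_eq_abs, abs_of_nonneg hz1]
      have := norm_nonneg z.2
      linarith
    exact max_le (le_trans h1 (le_max_left _ _)) (le_trans h2 (le_max_left _ _))
  obtain ⟨p₁, hp₁K, hp₁min⟩ := hKcompact.exists_isMinOn ⟨p₀, hp₀K⟩ hvcont.continuousOn
  have hv1p0 : v p₁ ≤ v p₀ := hp₁min hp₀K
  have hv1neg : v p₁ < 0 := lt_of_le_of_lt hv1p0 hv0neg
  -- global minimality over Ω
  have hglob : ∀ z ∈ Ω, v p₁ ≤ v z := by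
    intro z hz
    by_cases hzK : z.1 + ‖z.2‖ ≤ M'
    · exact hp₁min (hmemK z hz hzK)
    · push_neg at hzK
      have h1 : |w z| < c * δ * (-(v p₀)) := by
        refine hM z hz ?_
        have := le_max_left M (p₀.1 + ‖p₀.2‖)
        rw [hM'def] at hzK
        linarith
      have h2 : v p₀ < v z := by
        by_cases hwz : 0 ≤ w z
        · refine lt_of_lt_of_le hv0neg ?_
          simp only [hvdef]
          exact div_nonneg hwz (hHpos _).le
        · push_neg at hwz
          have h3 : c * δ * v p₀ < w z := by
            have := (abs_lt.1 h1).1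
            nlinarith
          have h4 : w z / (c * δ) ≤ w z / H z.1 := by
            rw [div_le_div_iff₀ hcδ (hHpos z.1)]
            exact mul_le_mul_of_nonpos_left (hHlb z.1) hwz.le
          have h5 : v p₀ < w z / (c * δ) := by
            rw [lt_div_iff₀ hcδ]
            nlinarith
          simp only [hvdef]
          simp only [hvdef] at h5 h4
          exact lt_of_lt_of_le h5 h4
      linarith
  -- p₁ ∈ Ω
  have hp₁Ω : p₁ ∈ Ω := by
    rw [hKdef] at hp₁K
    exact hp₁K.1
  have hp₁Ω' := hp₁Ω
  rw [hΩ] at hp₁Ω'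
  obtain ⟨hx1, hr1⟩ := hp₁Ω'
  have hw1H : w p₁ = v p₁ * H p₁.1 := by
    simp only [hvdef]
    exact (div_mul_cancel₀ _ (hHpos p₁.1).ne').symm
  -- Case 1 : on the sphere
  by_cases hsph : Real.sqrt (p₁.1 ^ 2 + ‖p₁.2‖ ^ 2) = R
  · have h0 := hsphere p₁ hx1 hsph
    have hge : 0 ≤ v p₁ := by
      simp only [hvdef]
      exact div_nonneg h0 (hHpos _).le
    linarith
  have hrlt : R < Real.sqrt (p₁.1 ^ 2 + ‖p₁.2‖ ^ 2) := lt_of_le_of_ne hr1 (Ne.symm hsph)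
  by_cases hx1pos : 0 < p₁.1
  · -- interior case
    have hUopen : IsOpen {z : ℝ × EuclideanSpace ℝ (Fin N) |
        0 < z.1 ∧ R < Real.sqrt (z.1 ^ 2 + ‖z.2‖ ^ 2)} := by
      have : {z : ℝ × EuclideanSpace ℝ (Fin N) | 0 < z.1 ∧ R < Real.sqrt (z.1 ^ 2 + ‖z.2‖ ^ 2)}
          = {z : ℝ × EuclideanSpace ℝ (Fin N) | 0 < z.1}
            ∩ {z | R < Real.sqrt (z.1 ^ 2 + ‖z.2‖ ^ 2)} := rfl
      rw [this]
      refine (isOpen_lt continuous_const continuous_fst).inter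
        (isOpen_lt continuous_const ?_)
      fun_prop
    have hUsub : {z : ℝ × EuclideanSpace ℝ (Fin N) |
        0 < z.1 ∧ R < Real.sqrt (z.1 ^ 2 + ‖z.2‖ ^ 2)} ⊆ Ω := by
      intro z hz
      rw [hΩ]
      exact ⟨hz.1.le, hz.2.le⟩
    have hmem : ∀ e : ℝ × EuclideanSpace ℝ (Fin N), ∀ᶠ t in 𝓝 (0:ℝ), p₁ + t • e ∈ Ω := by
      intro e
      have hlc : Continuous fun t : ℝ => p₁ + t • e := by fun_prop
      have h1 : ∀ᶠ t in 𝓝 (0:ℝ), p₁ + t • e ∈ {z : ℝ × EuclideanSpace ℝ (Fin N) |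
          0 < z.1 ∧ R < Real.sqrt (z.1 ^ 2 + ‖z.2‖ ^ 2)} := by
        apply hlc.continuousAt.eventually_mem
        apply hUopen.mem_nhds
        simpa using And.intro hx1pos hrlt
      exact h1.mono fun t ht => hUsub ht
    have hminh : ∀ e : ℝ × EuclideanSpace ℝ (Fin N), ∀ᶠ t in 𝓝 (0:ℝ),
        w p₁ / H p₁.1 ≤ w (p₁ + t • e) / H (p₁.1 + t * e.1) := by
      intro e
      filter_upwards [hmem e] with t ht
      have h6 := hglob _ ht
      simp only [hvdef] at h6
      simpa using h6
    have hbx := dir_second_bound w hw p₁ ((1:ℝ), 0) H H' H'' hH' hH'' hHpos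
      (hminh ((1:ℝ), 0))
    have hbs : ∀ i : Fin N, (0:ℝ) ≤ fderiv ℝ
        (fun z => fderiv ℝ w z ((0:ℝ), EuclideanSpace.single i (1:ℝ))) p₁
        ((0:ℝ), EuclideanSpace.single i (1:ℝ)) := by
      intro i
      have h7 := dir_second_bound w hw p₁ ((0:ℝ), EuclideanSpace.single i (1:ℝ)) H H' H'' hH' hH''
        hHpos (hminh ((0:ℝ), EuclideanSpace.single i (1:ℝ)))
      simpa using h7
    have hlapb : v p₁ * H'' p₁.1 ≤ lapH w p₁ := by
      have hsum : (0:ℝ) ≤ ∑ i : Fin N, fderiv ℝ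
          (fun z => fderiv ℝ w z ((0:ℝ), EuclideanSpace.single i (1:ℝ))) p₁
          ((0:ℝ), EuclideanSpace.single i (1:ℝ)) :=
        Finset.sum_nonneg fun i _ => hbs i
      have hx' : v p₁ * H'' p₁.1 ≤ fderiv ℝ
          (fun z => fderiv ℝ w z ((1:ℝ), 0)) p₁ ((1:ℝ), 0) := by
        have heq : w p₁ / H p₁.1 * (H'' p₁.1 * ((1:ℝ), (0 : EuclideanSpace ℝ (Fin N))).1
            * ((1:ℝ), (0 : EuclideanSpace ℝ (Fin N))).1) = v p₁ * H'' p₁.1 := by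
          simp only [hvdef]
          ring
        rw [← heq]
        exact hbx
      rw [lapH]
      linarith
    have hs := hsuper p₁ hx1pos hrlt
    have hE : (0:ℝ) < Real.exp (-μ * p₁.1) := Real.exp_pos _
    have hfin : -lapH w p₁ + m ^ 2 * w p₁ < 0 := by
      have h1 : -lapH w p₁ + m ^ 2 * w p₁ ≤ -(v p₁ * H'' p₁.1) + m ^ 2 * (v p₁ * H p₁.1) := by
        rw [← hw1H]; linarith
      have h2 : -(v p₁ * H'' p₁.1) + m ^ 2 * (v p₁ * H p₁.1)
          = v p₁ * (c * ((m ^ 2 - μ ^ 2) * Real.exp (-μ * p₁.1) + m ^ 2 * δ)) := by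
        simp only [hHdef, hH''def]; ring
      have h3 : 0 < c * ((m ^ 2 - μ ^ 2) * Real.exp (-μ * p₁.1) + m ^ 2 * δ) := by
        have h5 : 0 < m ^ 2 - μ ^ 2 := by nlinarith
        positivity
      have h4 : v p₁ * (c * ((m ^ 2 - μ ^ 2) * Real.exp (-μ * p₁.1) + m ^ 2 * δ)) < 0 :=
        mul_neg_of_neg_of_pos hv1neg h3
      linarith
    linarith
  · -- flat boundary case : p₁.1 = 0
    have hx0 : p₁.1 = 0 := le_antisymm (not_lt.1 hx1pos) hx1
    have hnorm2 : Real.sqrt (p₁.1 ^ 2 + ‖p₁.2‖ ^ 2) = ‖p₁.2‖ := by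
      rw [hx0]
      simp [Real.sqrt_sq (norm_nonneg p₁.2)]
    have hRy : R ≤ ‖p₁.2‖ := by rw [← hnorm2]; exact hr1
    have hH1 : H p₁.1 = 1 := by rw [hx0, hH0]
    have hw1v : w p₁ = v p₁ := by rw [hw1H, hH1, mul_one]
    have hw1neg : w p₁ < 0 := by rw [hw1v]; exact hv1neg
    have hwmin : ∀ z ∈ Ω, w p₁ ≤ w z := by
      intro z hz
      have h1 := hglob z hz
      by_cases hwz : 0 ≤ w z
      · linarith [hw1neg]
      · push_neg at hwz
        have hz1 : 0 ≤ z.1 := by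
          rw [hΩ] at hz; exact hz.1
        have h2 : v z ≤ w z := by
          simp only [hvdef]
          rw [div_le_iff₀ (hHpos z.1)]
          nlinarith [hHle1 z.1 hz1, hHpos z.1]
        rw [hw1v]
        linarith
    have hp₁eq : ((0:ℝ), p₁.2) = p₁ := by
      rw [← hx0]
    have hflat1 := hflat p₁.2 hRy (by rw [hp₁eq]; exact ⟨hw1neg, hwmin⟩)
    rw [hp₁eq] at hflat1
    -- one-sided derivative of v in the x-direction
    have hwd : Differentiable ℝ w := hw.differentiable (by norm_num)
    have hg : HasDerivAt (fun s : ℝ => w (p₁ + s • ((1:ℝ), (0 : EuclideanSpace ℝ (Fin N)))))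
        (fderiv ℝ w p₁ ((1:ℝ), (0 : EuclideanSpace ℝ (Fin N)))) 0 := by
      have h8 := line_hasDerivAt w hwd p₁ ((1:ℝ), (0 : EuclideanSpace ℝ (Fin N))) 0
      simpa using h8
    have hline : HasDerivAt (fun s : ℝ => p₁.1 + s * 1) ((1:ℝ)) 0 := by
      simpa using ((hasDerivAt_id (0:ℝ)).mul_const (1:ℝ)).const_add p₁.1
    have hψ : HasDerivAt (fun s : ℝ => H (p₁.1 + s * 1)) (H' (p₁.1 + 0 * 1) * 1) 0 :=
      (hH' (p₁.1 + 0 * 1)).comp 0 hline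
    have hφ : HasDerivAt
        (fun s : ℝ => w (p₁ + s • ((1:ℝ), (0 : EuclideanSpace ℝ (Fin N)))) / H (p₁.1 + s * 1))
        ((fderiv ℝ w p₁ ((1:ℝ), (0 : EuclideanSpace ℝ (Fin N))) * H (p₁.1 + 0 * 1)
          - w (p₁ + (0:ℝ) • ((1:ℝ), (0 : EuclideanSpace ℝ (Fin N)))) * (H' (p₁.1 + 0 * 1) * 1))
          / H (p₁.1 + 0 * 1) ^ 2) 0 :=
      hg.div hψ (hHpos _).ne'
    have hval : (fderiv ℝ w p₁ ((1:ℝ), (0 : EuclideanSpace ℝ (Fin N))) * H (p₁.1 + 0 * 1)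
          - w (p₁ + (0:ℝ) • ((1:ℝ), (0 : EuclideanSpace ℝ (Fin N)))) * (H' (p₁.1 + 0 * 1) * 1))
          / H (p₁.1 + 0 * 1) ^ 2
        = fderiv ℝ w p₁ ((1:ℝ), (0 : EuclideanSpace ℝ (Fin N))) + w p₁ * (c * μ) := by
      have harg : p₁.1 + 0 * 1 = 0 := by rw [hx0]; ring
      have hH'1 : H' (0:ℝ) = -(c * μ) := by
        simp only [hH'def]
        simp [Real.exp_zero]
      have hw0 : w (p₁ + (0:ℝ) • ((1:ℝ), (0 : EuclideanSpace ℝ (Fin N)))) = w p₁ := by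
        simp
      rw [harg, hH0, hH'1, hw0]
      ring
    rw [hval] at hφ
    have hone : ∀ t : ℝ, 0 ≤ t →
        (fun s : ℝ => w (p₁ + s • ((1:ℝ), (0 : EuclideanSpace ℝ (Fin N))))
            / H (p₁.1 + s * 1)) 0
          ≤ (fun s : ℝ => w (p₁ + s • ((1:ℝ), (0 : EuclideanSpace ℝ (Fin N))))
            / H (p₁.1 + s * 1)) t := by
      intro t ht
      have hmemΩ : p₁ + t • ((1:ℝ), (0 : EuclideanSpace ℝ (Fin N))) ∈ Ω := by
        rw [hΩ]
        refine ⟨?_, ?_⟩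
        · show (0:ℝ) ≤ (p₁ + t • ((1:ℝ), (0 : EuclideanSpace ℝ (Fin N)))).1
          have : (p₁ + t • ((1:ℝ), (0 : EuclideanSpace ℝ (Fin N)))).1 = p₁.1 + t * 1 := by
            simp
          rw [this, hx0]
          linarith
        · have h1 : (p₁ + t • ((1:ℝ), (0 : EuclideanSpace ℝ (Fin N)))).2 = p₁.2 := by
            simp
          show R ≤ Real.sqrt ((p₁ + t • ((1:ℝ), (0 : EuclideanSpace ℝ (Fin N)))).1 ^ 2
            + ‖(p₁ + t • ((1:ℝ), (0 : EuclideanSpace ℝ (Fin N)))).2‖ ^ 2)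
          rw [h1]
          refine le_trans hRy ?_
          rw [show ‖p₁.2‖ = Real.sqrt (‖p₁.2‖ ^ 2) from (Real.sqrt_sq (norm_nonneg _)).symm]
          apply Real.sqrt_le_sqrt
          nlinarith [sq_nonneg (p₁ + t • ((1:ℝ), (0 : EuclideanSpace ℝ (Fin N)))).1,
            Real.sq_sqrt (by positivity : (0:ℝ) ≤ ‖p₁.2‖ ^ 2)]
      have h3 := hglob _ hmemΩ
      simp only [hvdef] at h3
      have h4 : (p₁ + t • ((1:ℝ), (0 : EuclideanSpace ℝ (Fin N)))).1 = p₁.1 + t * 1 := by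
        simp
      rw [h4] at h3
      simpa using h3
    have hd := right_min_deriv_nonneg hφ hone
    nlinarith [hd, hflat1, hw1neg, hcμ]
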